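/- Fix r₀ ∈ [1,3] and assume: z ↦ g(r₀,z) is locally Lipschitz, g(r₀,−z) = g(r₀,z) for all z (vertical symmetry of g), and f(r₀,−z) = −f(r₀,z) for all z (anti-symmetry condition (W1) on f). Let (θ,z) : [0,T] → ℝ² be a Wilson orbit at radius r₀ with z(0) = −2 and z(T) = 2. Then z(T−t) = −z(t) for all t ∈ [0,T], and θ(T) = θ(0). Thus the Wilson flow satisfies the entry–exit condition (P2): an orbit that traverses the plug from the bottom face exits directly in front of its entry point. (Proposition 2.1, item (7).) -/

import Mathlib

open Set Metric

lemma locallyLipschitz_exists_lipschitzOnWith {f : ℝ → ℝ} (hf : LocallyLipschitz f)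
    {s : Set ℝ} (hs : IsCompact s) : ∃ C : NNReal, LipschitzOnWith C f s := by
  have hcont := hf.continuous
  choose K t ht hK using hf
  have hUopen : ∀ x, IsOpen (interior (t x)) := fun x => isOpen_interior
  have hxU : ∀ x, x ∈ interior (t x) := fun x => mem_interior_iff_mem_nhds.2 (ht x)
  obtain ⟨I, hI⟩ := hs.elim_finite_subcover (fun x => interior (t x)) hUopen
    (fun y hy => mem_iUnion.2 ⟨y, hxU y⟩)
  obtain ⟨δ, hδ, hball⟩ := lebesgue_number_lemma_of_metric hs
    (c := fun i : I => interior (t i)) (fun i => isOpen_interior)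
    (by intro y hy; rcases mem_iUnion₂.1 (hI hy) with ⟨i, hi, hyi⟩
        exact mem_iUnion.2 ⟨⟨i, hi⟩, hyi⟩)
  set Kmax : NNReal := I.sup K with hKmax
  obtain ⟨M, hM⟩ := Metric.isBounded_iff.1 (hs.image hcont).isBounded
  refine ⟨max Kmax (M / δ).toNNReal, LipschitzOnWith.of_dist_le_mul fun x hx y hy => ?_⟩
  rcases lt_or_ge (dist x y) δ with h | h
  · obtain ⟨i, hi⟩ := hball x hx
    have hxy : x ∈ t i ∧ y ∈ t i := by
      constructor
      · exact interior_subset (hi (mem_ball_self hδ))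
      · exact interior_subset (hi (by simpa [mem_ball, dist_comm] using h))
    calc dist (f x) (f y) ≤ K i * dist x y :=
          (hK (i : ℝ)).dist_le_mul x hxy.1 y hxy.2
      _ ≤ _ := by
          gcongr
          exact le_trans (by exact_mod_cast Finset.le_sup i.2) (le_max_left _ _)
  · have hMnn : 0 ≤ M := le_trans dist_nonneg (hM (mem_image_of_mem f hx) (mem_image_of_mem f hx))
    calc dist (f x) (f y) ≤ M := hM (mem_image_of_mem f hx) (mem_image_of_mem f hy)
      _ = (M / δ) * δ := by field_simp
      _ ≤ (M / δ).toNNReal * dist x y := by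
          rw [Real.coe_toNNReal _ (div_nonneg hMnn hδ.le)]
          gcongr
      _ ≤ _ := by gcongr; exact_mod_cast le_max_right _ _


/-- Proposition 2.1, item (7) (entry–exit condition): fix `r₀ ∈ [1,3]`, assume
`z ↦ g(r₀,z)` is locally Lipschitz, `g(r₀,·)` is even and `f(r₀,·)` is odd in `z`.
If a Wilson orbit `(θ,z)` at radius `r₀` on `[0,T]` has `z(0) = -2` and `z(T) = 2`,
then `z(T-t) = -z(t)` for all `t ∈ [0,T]` and `θ(T) = θ(0)`: an orbit traversing the
plug exits directly in front of its entry point. -/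
theorem wilson_entry_exit_condition
    (f g : ℝ × ℝ → ℝ)
    (r₀ : ℝ) (hr₀ : r₀ ∈ Icc (1 : ℝ) 3)
    (hLip : LocallyLipschitz (fun w : ℝ => g (r₀, w)))
    (hgsym : ∀ w : ℝ, g (r₀, -w) = g (r₀, w))
    (hfanti : ∀ w : ℝ, f (r₀, -w) = - f (r₀, w))
    (T : ℝ) (hT : 0 ≤ T)
    (θ z : ℝ → ℝ)
    (horbit : ∀ t ∈ Icc (0 : ℝ) T,
      HasDerivAt θ (f (r₀, z t)) t ∧ HasDerivAt z (g (r₀, z t)) t)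
    (hz0 : z 0 = -2) (hzT : z T = 2) :
    (∀ t ∈ Icc (0 : ℝ) T, z (T - t) = - z t) ∧ θ T = θ 0 := by
  -- continuity of z and θ on [0,T]
  have hzc : ContinuousOn z (Icc 0 T) :=
    fun t ht => ((horbit t ht).2).continuousAt.continuousWithinAt
  have hθc : ContinuousOn θ (Icc 0 T) :=
    fun t ht => ((horbit t ht).1).continuousAt.continuousWithinAt
  have hmaps : MapsTo (fun u : ℝ => T - u) (Icc 0 T) (Icc 0 T) := by
    intro u hu
    show T - u ∈ Icc 0 T
    exact ⟨by linarith [hu.2], by linarith [hu.1]⟩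
  have hrefl : ∀ t ∈ Icc (0:ℝ) T, T - t ∈ Icc (0:ℝ) T := fun t ht => hmaps ht
  -- the compact set containing both trajectories
  have hAcomp : IsCompact (z '' Icc 0 T) := isCompact_Icc.image_of_continuousOn hzc
  set S : Set ℝ := z '' Icc 0 T ∪ (fun x : ℝ => -x) '' (z '' Icc 0 T) with hS
  have hScomp : IsCompact S := hAcomp.union (hAcomp.image continuous_neg)
  obtain ⟨C, hC⟩ := locallyLipschitz_exists_lipschitzOnWith hLip hScomp
  -- the reflected solution
  set w : ℝ → ℝ := fun t => -z (T - t) with hw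
  have hwc : ContinuousOn w (Icc 0 T) :=
    ((hzc.comp ((continuous_const.sub continuous_id).continuousOn) hmaps)).neg
  have hw' : ∀ t ∈ Ico (0:ℝ) T, HasDerivAt w (g (r₀, w t)) t := by
    intro t ht
    have hTt : T - t ∈ Icc (0:ℝ) T := hrefl t (Ico_subset_Icc_self ht)
    have hinner : HasDerivAt (fun u : ℝ => T - u) (-1) t := by
      simpa using (hasDerivAt_id t).const_sub T
    have h1 : HasDerivAt (fun u : ℝ => z (T - u)) (g (r₀, z (T - t)) * (-1)) t :=
      ((horbit _ hTt).2).comp t hinner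
    have h2 := h1.neg
    have hval : -(g (r₀, z (T - t)) * (-1)) = g (r₀, w t) := by
      have : g (r₀, w t) = g (r₀, z (T - t)) := by
        rw [hw]; simpa using hgsym (z (T - t))
      rw [this]; ring
    rw [hval] at h2
    exact h2
  -- uniqueness of solutions
  have key : EqOn z w (Icc 0 T) := by
    apply ODE_solution_unique_of_mem_Icc_right
      (v := fun _ x => g (r₀, x)) (s := fun _ => S) (fun _ _ => hC)
      hzc
      (fun t ht => ((horbit t (Ico_subset_Icc_self ht)).2).hasDerivWithinAt)
      (fun t ht => Or.inl (mem_image_of_mem z (Ico_subset_Icc_self ht)))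
      hwc
      (fun t ht => (hw' t ht).hasDerivWithinAt)
      (fun t ht => Or.inr ⟨z (T - t), mem_image_of_mem z
        (hrefl t (Ico_subset_Icc_self ht)), rfl⟩)
    simp [hw, hzT, hz0]
  have hzsym : ∀ t ∈ Icc (0:ℝ) T, z (T - t) = - z t := by
    intro t ht
    have h2 : z t = -z (T - t) := key ht
    linarith [h2]
  refine ⟨hzsym, ?_⟩
  -- the θ part
  set h : ℝ → ℝ := fun t => θ t - θ (T - t) with hh
  have hhc : ContinuousOn h (Icc 0 T) :=
    hθc.sub (hθc.comp ((continuous_const.sub continuous_id).continuousOn) hmaps)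
  have hhderiv : ∀ t ∈ Ico (0:ℝ) T, HasDerivWithinAt h 0 (Ici t) t := by
    intro t ht
    have ht' : t ∈ Icc (0:ℝ) T := Ico_subset_Icc_self ht
    have hTt : T - t ∈ Icc (0:ℝ) T := hrefl t ht'
    have hinner : HasDerivAt (fun u : ℝ => T - u) (-1) t := by
      simpa using (hasDerivAt_id t).const_sub T
    have h1 : HasDerivAt (fun u : ℝ => θ (T - u)) (f (r₀, z (T - t)) * (-1)) t :=
      ((horbit _ hTt).1).comp t hinner
    have h2 := ((horbit t ht').1).sub h1
    have hval : f (r₀, z t) - f (r₀, z (T - t)) * (-1) = 0 := by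
      rw [hzsym t ht', hfanti]; ring
    rw [hval] at h2
    exact h2.hasDerivWithinAt
  have := constant_of_has_deriv_right_zero hhc hhderiv T (right_mem_Icc.2 hT)
  simp only [hh, sub_self, sub_zero] at this
  linarith [this]
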